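/- Let A = L* + E be symmetric with P_k(A) = UΛUᵀ and remaining part ŨΛ̃Ũᵀ, and suppose Λ is invertible. Then for all integers p, q ≥ 1 with s = p + q, ‖L* U Λ^{-(s+1)} Uᵀ L*‖₂ ≤ |λ_k|^{-(s-1)} (1 + ‖E‖₂/|λ_k|)². -/

import Mathlib

open Matrix
open scoped Matrix.Norms.L2Operator

/-- The spectral (operator) norm of a real matrix. -/
noncomputable def specNorm {m n : Type*} [Fintype m] [Fintype n] [DecidableEq n]
    (A : Matrix m n ℝ) : ℝ :=
  ‖LinearMap.toContinuousLinearMap (Matrix.toEuclideanLin A)‖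

lemma specNorm_eq_l2 {m n : Type*} [Fintype m] [Fintype n] [DecidableEq n]
    (A : Matrix m n ℝ) : specNorm A = ‖A‖ := rfl

lemma l2_diag_le {k : ℕ} (d : Fin k → ℝ) (C : ℝ) (hC : 0 ≤ C) (h : ∀ i, |d i| ≤ C) :
    ‖Matrix.diagonal d‖ ≤ C := by
  rw [Matrix.l2_opNorm_def]
  apply ContinuousLinearMap.opNorm_le_bound _ hC
  intro x
  rw [LinearEquiv.trans_apply, LinearMap.coe_toContinuousLinearMap',
    Matrix.toEuclideanLin_apply]
  rw [EuclideanSpace.norm_eq, EuclideanSpace.norm_eq]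
  rw [← Real.sqrt_sq hC, ← Real.sqrt_mul (by positivity)]
  apply Real.sqrt_le_sqrt
  rw [Finset.mul_sum]
  apply Finset.sum_le_sum
  intro i _
  have hcomp : (WithLp.equiv 2 (Fin k → ℝ)).symm
      (Matrix.diagonal d *ᵥ (WithLp.equiv 2 (Fin k → ℝ)) x) i = d i * x i :=
    Matrix.mulVec_diagonal d ((WithLp.equiv 2 (Fin k → ℝ)) x) i
  rw [show (WithLp.toLp 2 (Matrix.diagonal d *ᵥ x.ofLp)).ofLp i = d i * x i from hcomp]
  have hxn : ‖x i‖ = |x i| := rfl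
  rw [Real.norm_eq_abs, hxn, abs_mul, mul_pow]
  have h2 : |d i|^2 ≤ C^2 := by nlinarith [h i, abs_nonneg (d i)]
  nlinarith [sq_nonneg (x i), abs_nonneg (x i), sq_abs (x i)]

lemma l2_one_le {k : ℕ} : ‖(1 : Matrix (Fin k) (Fin k) ℝ)‖ ≤ 1 := by
  have : (1 : Matrix (Fin k) (Fin k) ℝ) = Matrix.diagonal (fun _ => 1) := by simp
  rw [this]
  exact l2_diag_le _ 1 zero_le_one (fun i => by simp)

lemma conjT_eq_T {m n : Type*} (A : Matrix m n ℝ) : Aᴴ = Aᵀ := by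
  ext i j; simp [Matrix.conjTranspose_apply]

lemma l2_isometry_norm_le_one {n k : ℕ}
    (U : Matrix (Fin n) (Fin k) ℝ) (hUU : Uᵀ * U = 1) : ‖U‖ ≤ 1 := by
  have h := Matrix.l2_opNorm_conjTranspose_mul_self U
  rw [conjT_eq_T, hUU] at h
  nlinarith [norm_nonneg U, l2_one_le (k := k)]

lemma l2_transpose {m n : ℕ} (A : Matrix (Fin m) (Fin n) ℝ) : ‖Aᵀ‖ = ‖A‖ := by
  rw [← conjT_eq_T]; exact Matrix.l2_opNorm_conjTranspose A

/-- Spectral-norm bound for the higher-order terms in the perturbation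
expansion: with `A = L + E` symmetric, `P_k(A) = U Λ Uᵀ` the top-`k` part and
`Ũ Λ̃ Ũᵀ` the remaining part, `Λ` invertible, for all `p, q ≥ 1` with `s = p+q`,
`‖L U Λ^{-(s+1)} Uᵀ L‖₂ ≤ |λ_k|^{-(s-1)} (1 + ‖E‖₂/|λ_k|)²`,
where `|λ_k| = min_i |Λ i i|`. -/
theorem higher_term_specNorm_bound {n k l : ℕ}
    (A L E : Matrix (Fin n) (Fin n) ℝ)
    (U : Matrix (Fin n) (Fin k) ℝ) (Ut : Matrix (Fin n) (Fin l) ℝ)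
    (Lam : Matrix (Fin k) (Fin k) ℝ) (Lamt : Matrix (Fin l) (Fin l) ℝ)
    (dLam : Fin k → ℝ) (dLamt : Fin l → ℝ)
    (hLam : Lam = Matrix.diagonal dLam) (hLamt : Lamt = Matrix.diagonal dLamt)
    (hA : A = U * Lam * Uᵀ + Ut * Lamt * Utᵀ)
    (hUU : Uᵀ * U = 1) (hUtUt : Utᵀ * Ut = 1) (hUUt : Uᵀ * Ut = 0)
    (htop : ∀ (i : Fin k) (j : Fin l), |dLamt j| ≤ |dLam i|)
    (hLsym : Lᵀ = L) (hAsym : Aᵀ = A)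
    (hE : E = A - L)
    (hinv : IsUnit Lam) :
    ∀ p q : ℕ, 1 ≤ p → 1 ≤ q →
      specNorm (L * U * (Lam⁻¹) ^ (p + q + 1) * Uᵀ * L) ≤
        (1 / (⨅ i, |dLam i|)) ^ (p + q - 1) *
          (1 + specNorm E / (⨅ i, |dLam i|)) ^ 2 := by
  intro p q hp hq
  set c : ℝ := ⨅ i, |dLam i| with hc
  set r : ℝ := 1 / c with hr
  -- basic facts about c and r
  have hc0 : 0 ≤ c := Real.iInf_nonneg (fun i => abs_nonneg _)
  have hr0 : 0 ≤ r := by rw [hr]; positivity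
  have hdetU : IsUnit Lam.det := (Matrix.isUnit_iff_isUnit_det _).mp hinv
  have hdne : ∀ i, dLam i ≠ 0 := by
    intro i
    have hdet := hdetU
    rw [hLam, Matrix.det_diagonal] at hdet
    have := hdet.ne_zero
    exact fun h => this (Finset.prod_eq_zero (Finset.mem_univ i) h)
  have hcle : ∀ i, c ≤ |dLam i| := fun i => ciInf_le (Finite.bddBelow_range _) i
  have hcbound : ∀ i : Fin k, |(dLam i)⁻¹| ≤ r := by
    intro i
    have : Nonempty (Fin k) := ⟨i⟩
    obtain ⟨i0, hi0⟩ := Finite.exists_min (fun j => |dLam j|)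
    have hcpos : 0 < c := lt_of_lt_of_le (abs_pos.mpr (hdne i0)) (le_ciInf hi0)
    rw [abs_inv, hr, one_div]
    exact inv_anti₀ hcpos (hcle i)
  -- norm facts
  have hU1 : ‖U‖ ≤ 1 := l2_isometry_norm_le_one U hUU
  have hUt1 : ‖Uᵀ‖ ≤ 1 := by rw [l2_transpose]; exact hU1
  have hinvnorm : ‖Lam⁻¹‖ ≤ r := by
    have hinvd : Lam⁻¹ = Matrix.diagonal (fun i => (dLam i)⁻¹) := by
      apply Matrix.inv_eq_right_inv
      rw [hLam, Matrix.diagonal_mul_diagonal]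
      have hone : (fun i => dLam i * (dLam i)⁻¹) = fun _ : Fin k => (1:ℝ) :=
        funext fun i => mul_inv_cancel₀ (hdne i)
      rw [hone, Matrix.diagonal_one]
    rw [hinvd]
    exact l2_diag_le _ r hr0 hcbound
  have hpow : ∀ j : ℕ, ‖(Lam⁻¹) ^ j‖ ≤ r ^ j := by
    intro j
    induction j with
    | zero => simpa using l2_one_le (k := k)
    | succ j ih =>
      calc ‖(Lam⁻¹) ^ (j+1)‖ = ‖(Lam⁻¹) ^ j * Lam⁻¹‖ := by rw [pow_succ]
        _ ≤ ‖(Lam⁻¹) ^ j‖ * ‖Lam⁻¹‖ := Matrix.l2_opNorm_mul _ _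
        _ ≤ r ^ j * r := mul_le_mul ih hinvnorm (norm_nonneg _) (by positivity)
        _ = r ^ (j+1) := (pow_succ r j).symm
  have hterm : ∀ j : ℕ, ‖U * (Lam⁻¹) ^ j * Uᵀ‖ ≤ r ^ j := by
    intro j
    calc ‖U * (Lam⁻¹) ^ j * Uᵀ‖ ≤ ‖U * (Lam⁻¹) ^ j‖ * ‖Uᵀ‖ := Matrix.l2_opNorm_mul _ _
      _ ≤ (‖U‖ * ‖(Lam⁻¹) ^ j‖) * ‖Uᵀ‖ :=
          mul_le_mul_of_nonneg_right (Matrix.l2_opNorm_mul _ _) (norm_nonneg _)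
      _ ≤ (1 * (r ^ j)) * 1 := by
          apply mul_le_mul _ hUt1 (norm_nonneg _) (by positivity)
          exact mul_le_mul hU1 (hpow j) (norm_nonneg _) zero_le_one
      _ = r ^ j := by ring
  -- set s = p + q = m + 2
  obtain ⟨m, hm⟩ : ∃ m, p + q = m + 2 := ⟨p + q - 2, by omega⟩
  rw [hm]
  have e1 : m + 2 + 1 = m + 3 := rfl
  have e2 : m + 2 - 1 = m + 1 := rfl
  rw [e1, e2]
  -- algebraic facts
  have hLi : Lam * Lam⁻¹ = 1 := Matrix.mul_nonsing_inv _ hdetU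
  have hIl : Lam⁻¹ * Lam = 1 := Matrix.nonsing_inv_mul _ hdetU
  have hLP : ∀ j : ℕ, Lam * (Lam⁻¹) ^ (j+1) = (Lam⁻¹) ^ j := by
    intro j; rw [pow_succ', ← Matrix.mul_assoc, hLi, Matrix.one_mul]
  have hPL : ∀ j : ℕ, (Lam⁻¹) ^ (j+1) * Lam = (Lam⁻¹) ^ j := by
    intro j; rw [pow_succ, Matrix.mul_assoc, hIl, Matrix.mul_one]
  have hUtU : Utᵀ * U = 0 := by
    have := congrArg Matrix.transpose hUUt
    simpa [Matrix.transpose_mul] using this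
  have hAU : A * U = U * Lam := by
    rw [hA, Matrix.add_mul, Matrix.mul_assoc (U * Lam) Uᵀ U, hUU,
      Matrix.mul_assoc (Ut * Lamt) Utᵀ U, hUtU, Matrix.mul_one, Matrix.mul_zero, add_zero]
  have hLamT : Lamᵀ = Lam := by rw [hLam, Matrix.diagonal_transpose]
  have hUA : Uᵀ * A = Lam * Uᵀ := by
    have h := congrArg Matrix.transpose hAU
    rwa [Matrix.transpose_mul, Matrix.transpose_mul, hAsym, hLamT] at h
  have hL : L = A - E := by rw [hE]; abel
  have hLU : L * U = U * Lam - E * U := by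
    rw [hL, Matrix.sub_mul, hAU]
  have hUL : Uᵀ * L = Lam * Uᵀ - Uᵀ * E := by
    rw [hL, Matrix.mul_sub, hUA]
  -- the key identity
  have h1 : U * Lam * (Lam⁻¹) ^ (m+3) * (Lam * Uᵀ) = U * (Lam⁻¹) ^ (m+1) * Uᵀ := by
    rw [Matrix.mul_assoc U Lam _, hLP (m+2), ← Matrix.mul_assoc _ Lam Uᵀ,
      Matrix.mul_assoc U _ Lam, hPL (m+1)]
  have h2 : U * Lam * (Lam⁻¹) ^ (m+3) * (Uᵀ * E) = U * (Lam⁻¹) ^ (m+2) * Uᵀ * E := by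
    rw [Matrix.mul_assoc U Lam _, hLP (m+2), ← Matrix.mul_assoc]
  have h3 : E * U * (Lam⁻¹) ^ (m+3) * (Lam * Uᵀ) = E * (U * (Lam⁻¹) ^ (m+2) * Uᵀ) := by
    rw [Matrix.mul_assoc E U _, Matrix.mul_assoc E _ _, ← Matrix.mul_assoc _ Lam Uᵀ,
      Matrix.mul_assoc U _ Lam, hPL (m+2)]
  have h4 : E * U * (Lam⁻¹) ^ (m+3) * (Uᵀ * E) = E * (U * (Lam⁻¹) ^ (m+3) * Uᵀ) * E := by
    simp only [Matrix.mul_assoc]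
  have key : L * U * (Lam⁻¹) ^ (m+3) * Uᵀ * L
      = U * (Lam⁻¹) ^ (m+1) * Uᵀ - E * (U * (Lam⁻¹) ^ (m+2) * Uᵀ)
        - U * (Lam⁻¹) ^ (m+2) * Uᵀ * E + E * (U * (Lam⁻¹) ^ (m+3) * Uᵀ) * E := by
    rw [Matrix.mul_assoc (L * U * (Lam⁻¹) ^ (m+3)) Uᵀ L, hLU, hUL,
      Matrix.sub_mul, Matrix.sub_mul, Matrix.mul_sub, Matrix.mul_sub, h1, h2, h3, h4]
    abel
  rw [specNorm_eq_l2, specNorm_eq_l2, key]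
  -- norm bounds for the four terms
  have hE0 : (0:ℝ) ≤ ‖E‖ := norm_nonneg _
  have b1 : ‖U * (Lam⁻¹) ^ (m+1) * Uᵀ‖ ≤ r ^ (m+1) := hterm _
  have b2 : ‖E * (U * (Lam⁻¹) ^ (m+2) * Uᵀ)‖ ≤ ‖E‖ * r ^ (m+2) :=
    le_trans (Matrix.l2_opNorm_mul _ _)
      (mul_le_mul_of_nonneg_left (hterm _) hE0)
  have b3 : ‖U * (Lam⁻¹) ^ (m+2) * Uᵀ * E‖ ≤ r ^ (m+2) * ‖E‖ :=
    le_trans (Matrix.l2_opNorm_mul _ _)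
      (mul_le_mul_of_nonneg_right (hterm _) hE0)
  have b4 : ‖E * (U * (Lam⁻¹) ^ (m+3) * Uᵀ) * E‖ ≤ ‖E‖ * r ^ (m+3) * ‖E‖ := by
    calc ‖E * (U * (Lam⁻¹) ^ (m+3) * Uᵀ) * E‖
        ≤ ‖E * (U * (Lam⁻¹) ^ (m+3) * Uᵀ)‖ * ‖E‖ := Matrix.l2_opNorm_mul _ _
      _ ≤ (‖E‖ * r ^ (m+3)) * ‖E‖ := by
          apply mul_le_mul_of_nonneg_right _ hE0
          exact le_trans (Matrix.l2_opNorm_mul _ _)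
            (mul_le_mul_of_nonneg_left (hterm _) hE0)
  have tri : ‖U * (Lam⁻¹) ^ (m+1) * Uᵀ - E * (U * (Lam⁻¹) ^ (m+2) * Uᵀ)
        - U * (Lam⁻¹) ^ (m+2) * Uᵀ * E + E * (U * (Lam⁻¹) ^ (m+3) * Uᵀ) * E‖
      ≤ ‖U * (Lam⁻¹) ^ (m+1) * Uᵀ‖ + ‖E * (U * (Lam⁻¹) ^ (m+2) * Uᵀ)‖
        + ‖U * (Lam⁻¹) ^ (m+2) * Uᵀ * E‖ + ‖E * (U * (Lam⁻¹) ^ (m+3) * Uᵀ) * E‖ := by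
    calc ‖_ - _ - _ + _‖ ≤ ‖_ - _ - _‖ + ‖_‖ := norm_add_le _ _
      _ ≤ (‖_ - _‖ + ‖_‖) + ‖_‖ := by gcongr; exact norm_sub_le _ _
      _ ≤ ((‖_‖ + ‖_‖) + ‖_‖) + ‖_‖ := by gcongr; exact norm_sub_le _ _
  have hdivr : ‖E‖ / c = ‖E‖ * r := by rw [hr, div_eq_mul_one_div]
  rw [hdivr]
  calc ‖_ - _ - _ + _‖ ≤ _ := tri
    _ ≤ r ^ (m+1) + ‖E‖ * r ^ (m+2) + r ^ (m+2) * ‖E‖ + ‖E‖ * r ^ (m+3) * ‖E‖ := by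
        gcongr
    _ = r ^ (m+1) * (1 + ‖E‖ * r) ^ 2 := by ring
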